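/- With U* = (N + A B B^H A^H)^{-1} A B and E* = E(U*, B) = (I − (U*)^H A B)(I − (U*)^H A B)^H + (U*)^H N U*, the matrix I − (U*)^H A B equals E*, and hence E* = (I + B^H A^H N^{-1} A B)^{-1} is Hermitian positive definite with log det((E*)^{-1}) = log det(I + A B B^H A^H N^{-1}). -/
import Mathlib


open Matrix ComplexOrder

theorem mmse_error_covariance (n p m : ℕ)
    (A : Matrix (Fin n) (Fin p) ℂ) (B : Matrix (Fin p) (Fin m) ℂ)
    (N : Matrix (Fin n) (Fin n) ℂ) (hN : N.PosDef)
    (Uopt : Matrix (Fin n) (Fin m) ℂ)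
    (hUopt : Uopt = (N + A * B * Bᴴ * Aᴴ)⁻¹ * (A * B))
    (Eopt : Matrix (Fin m) (Fin m) ℂ)
    (hEopt : Eopt = ((1 : Matrix (Fin m) (Fin m) ℂ) - Uoptᴴ * (A * B)) *
        ((1 : Matrix (Fin m) (Fin m) ℂ) - Uoptᴴ * (A * B))ᴴ + Uoptᴴ * N * Uopt) :
    (1 : Matrix (Fin m) (Fin m) ℂ) - Uoptᴴ * (A * B) = Eopt ∧
    Eopt = ((1 : Matrix (Fin m) (Fin m) ℂ) + Bᴴ * Aᴴ * N⁻¹ * (A * B))⁻¹ ∧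
    Eopt.PosDef ∧
    Real.log (Eopt⁻¹).det.re =
      Real.log (((1 : Matrix (Fin n) (Fin n) ℂ) + A * B * Bᴴ * Aᴴ * N⁻¹).det.re) := by
  set C : Matrix (Fin n) (Fin m) ℂ := A * B with hCdef
  have hCH : Cᴴ = Bᴴ * Aᴴ := by rw [hCdef, conjTranspose_mul]
  have hCC : C * Bᴴ * Aᴴ = C * Cᴴ := by rw [hCH, Matrix.mul_assoc]
  set S : Matrix (Fin n) (Fin n) ℂ := N + C * Cᴴ with hSdef
  have hS : S.PosDef := hN.add_posSemidef (posSemidef_self_mul_conjTranspose C)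
  have hSH : Sᴴ = S := hS.isHermitian
  have hSdet : IsUnit S.det := hS.det_pos.ne'.isUnit
  have hNdet : IsUnit N.det := hN.det_pos.ne'.isUnit
  have hSl : S⁻¹ * S = 1 := nonsing_inv_mul S hSdet
  have hNr : N * N⁻¹ = 1 := mul_nonsing_inv N hNdet
  have hU : Uopt = S⁻¹ * C := by rw [hUopt, hCC]
  have hSinvH : (S⁻¹)ᴴ = S⁻¹ := by rw [conjTranspose_nonsing_inv, hSH]
  have hUH : Uoptᴴ = Cᴴ * S⁻¹ := by rw [hU, conjTranspose_mul, hSinvH]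
  set M : Matrix (Fin m) (Fin m) ℂ := Cᴴ * S⁻¹ * C with hM
  have hMH : Mᴴ = M := by
    rw [hM]
    simp only [conjTranspose_mul, hSinvH, conjTranspose_conjTranspose, Matrix.mul_assoc]
  have hUC : Uoptᴴ * C = M := by rw [hUH, hM]
  have hNS : N = S - C * Cᴴ := by rw [hSdef]; abel
  have hNU : Uoptᴴ * N * Uopt = M - M * M := by
    rw [hUH, hU, hNS]
    have c1 : S⁻¹ * (S * (S⁻¹ * C)) = S⁻¹ * C := by
      rw [← Matrix.mul_assoc, hSl, Matrix.one_mul]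
    simp only [Matrix.mul_sub, Matrix.sub_mul, Matrix.mul_assoc, c1]
    rw [hM]
    simp only [Matrix.mul_assoc]
  have hE1 : Eopt = 1 - M := by
    rw [hEopt, hUC, hNU, conjTranspose_sub, conjTranspose_one, hMH]
    noncomm_ring
  have hSN : S * N⁻¹ = 1 + C * (Cᴴ * N⁻¹) := by
    rw [hSdef, Matrix.add_mul, hNr, Matrix.mul_assoc]
  have hkey : N⁻¹ = S⁻¹ + S⁻¹ * (C * (Cᴴ * N⁻¹)) := by
    calc N⁻¹ = S⁻¹ * (S * N⁻¹) := by rw [← Matrix.mul_assoc, hSl, Matrix.one_mul]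
    _ = S⁻¹ + S⁻¹ * (C * (Cᴴ * N⁻¹)) := by rw [hSN, Matrix.mul_add, Matrix.mul_one]
  have hX : Cᴴ * N⁻¹ * C = M + M * (Cᴴ * N⁻¹ * C) := by
    conv_lhs => rw [hkey]
    rw [hM]
    simp only [Matrix.add_mul, Matrix.mul_add, Matrix.mul_assoc]
  have hprod : (1 - M) * (1 + Cᴴ * N⁻¹ * C) = 1 := by
    set X := Cᴴ * N⁻¹ * C with hXdef
    calc (1 - M) * (1 + X) = 1 + X - (M + M * X) := by noncomm_ring
    _ = 1 + X - X := by rw [← hX]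
    _ = 1 := by abel
  have h2 : Eopt = (1 + Cᴴ * N⁻¹ * C)⁻¹ := by
    refine (inv_eq_left_inv ?_).symm
    rw [hE1]; exact hprod
  have hXeq : Bᴴ * Aᴴ * N⁻¹ * C = Cᴴ * N⁻¹ * C := by rw [← hCH]
  have hOneX : ((1 : Matrix (Fin m) (Fin m) ℂ) + Cᴴ * N⁻¹ * C).PosDef :=
    Matrix.PosDef.add_posSemidef Matrix.PosDef.one
      ((hN.inv.posSemidef).conjTranspose_mul_mul_same C)
  have hEinv : Eopt⁻¹ = 1 + Cᴴ * N⁻¹ * C := by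
    rw [h2, nonsing_inv_nonsing_inv _ hOneX.det_pos.ne'.isUnit]
  refine ⟨by rw [hUC, hE1], by rw [hXeq, h2], h2 ▸ hOneX.inv, ?_⟩
  have hdet : ((1 : Matrix (Fin m) (Fin m) ℂ) + Cᴴ * N⁻¹ * C).det
      = ((1 : Matrix (Fin n) (Fin n) ℂ) + C * Bᴴ * Aᴴ * N⁻¹).det := by
    rw [Matrix.det_one_add_mul_comm (Cᴴ * N⁻¹) C, hCH]
    simp only [Matrix.mul_assoc]
  rw [hEinv, hdet]
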